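/- For all z in the unit disk, z·₂F₁(1,3/2;3;z) = 4z/(1+√(1-z))², where √ is the principal branch of the square root. -/

import Mathlib

open Complex MeasureTheory Filter Metric Set

/-- The Gaussian hypergeometric function as a power series. -/
noncomputable def hyp (a b c z : ℂ) : ℂ :=
  ∑' n : ℕ, ((ascPochhammer ℂ n).eval a * (ascPochhammer ℂ n).eval b /
    ((ascPochhammer ℂ n).eval c * (n.factorial : ℂ))) * z ^ n


lemma catalan_le_four_pow (n : ℕ) : catalan n ≤ 4 ^ n := by
  calc catalan n ≤ (n + 1) * catalan n := Nat.le_mul_of_pos_left _ n.succ_pos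
    _ = n.centralBinom := succ_mul_catalan_eq_centralBinom n
    _ ≤ (2 * n + 1).choose n := Nat.choose_le_choose n (by omega)
    _ ≤ 4 ^ n := Nat.choose_middle_le_pow n

lemma catalan_fact (n : ℕ) : catalan (n + 1) * ((n + 2).factorial * (n + 1).factorial)
    = (2 * n + 2).factorial := by
  have h1 : (n + 2) * catalan (n + 1) = (n + 1).centralBinom :=
    succ_mul_catalan_eq_centralBinom (n + 1)
  have h2 := Nat.choose_mul_factorial_mul_factorial (show n + 1 ≤ 2 * (n + 1) by omega)
  rw [Nat.centralBinom] at h1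
  have h3 : 2 * (n + 1) - (n + 1) = n + 1 := by omega
  rw [h3] at h2
  have h4 : 2 * (n + 1) = 2 * n + 2 := by ring
  rw [h4] at h1 h2
  calc catalan (n+1) * ((n+2).factorial * (n+1).factorial)
      = ((n+2) * catalan (n+1)) * ((n+1).factorial * (n+1).factorial) := by
        rw [Nat.factorial_succ]; ring
    _ = (2*n+2).choose (n+1) * ((n+1).factorial * (n+1).factorial) := by rw [h1]
    _ = (2*n+2).factorial := by rw [← h2]; ring

lemma poch_three (n : ℕ) : (ascPochhammer ℂ n).eval 3 * 2 = ((n + 2).factorial : ℂ) := by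
  induction n with
  | zero => simp [ascPochhammer_zero]
  | succ n ih =>
    rw [ascPochhammer_succ_eval]
    have : ((n + 1 + 2).factorial : ℂ) = ((n + 2).factorial : ℂ) * (n + 3) := by
      push_cast [Nat.factorial_succ]; ring
    rw [this, ← ih]; push_cast; ring

lemma poch_half (n : ℕ) :
    (ascPochhammer ℂ n).eval (3 / 2) * (2 * 4 ^ n * (n + 1).factorial)
      = ((2 * n + 2).factorial : ℂ) := by
  induction n with
  | zero => simp [ascPochhammer_zero]
  | succ n ih =>
    rw [ascPochhammer_succ_eval]
    have h1 : ((2 * (n + 1) + 2).factorial : ℂ)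
        = ((2 * n + 2).factorial : ℂ) * ((2 * n + 3) * (2 * n + 4)) := by
      have : 2 * (n + 1) + 2 = (2 * n + 3) + 1 := by ring
      rw [this, Nat.factorial_succ, show 2 * n + 3 = (2 * n + 2) + 1 from rfl,
        Nat.factorial_succ]
      push_cast; ring
    have h2 : (((n + 1) + 1).factorial : ℂ) = ((n + 1).factorial : ℂ) * (n + 2) := by
      push_cast [Nat.factorial_succ]; ring
    rw [h1, ← ih, h2]; push_cast; ring

lemma coeff_eq (n : ℕ) :
    (ascPochhammer ℂ n).eval 1 * (ascPochhammer ℂ n).eval (3 / 2) /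
      ((ascPochhammer ℂ n).eval 3 * (n.factorial : ℂ))
      = (catalan (n + 1) : ℂ) / 4 ^ n := by
  have hf : ∀ m : ℕ, ((m.factorial : ℂ)) ≠ 0 := fun m =>
    Nat.cast_ne_zero.mpr m.factorial_ne_zero
  have h4 : (4 : ℂ) ^ n ≠ 0 := by norm_num
  have h3 : (ascPochhammer ℂ n).eval 3 ≠ 0 := by
    intro h
    have := poch_three n
    rw [h, zero_mul] at this
    exact hf (n + 2) this.symm
  have hc : (catalan (n + 1) : ℂ) * (((n + 2).factorial : ℂ) * ((n + 1).factorial : ℂ))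
      = ((2 * n + 2).factorial : ℂ) := by exact_mod_cast congrArg (Nat.cast : ℕ → ℂ) (catalan_fact n)
  rw [ascPochhammer_eval_one, div_eq_div_iff (by exact mul_ne_zero h3 (hf n)) h4]
  -- goal: n! * eval(3/2) * 4^n = catalan(n+1) * (eval 3 * n!)
  have hh := poch_half n
  have ht := poch_three n
  have hfs : ((n + 1).factorial : ℂ) = (n.factorial : ℂ) * (n + 1) := by
    push_cast [Nat.factorial_succ]; ring
  have hn1 : ((n : ℂ) + 1) ≠ 0 := by
    have : (0:ℝ) < n + 1 := by positivity
    intro h; exact_mod_cast absurd h (by exact_mod_cast this.ne')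
  apply mul_left_cancel₀ (mul_ne_zero (two_ne_zero (α := ℂ)) (hf (n+1)))
  linear_combination (n.factorial : ℂ) * hh - (n.factorial : ℂ) * hc
    - ((catalan (n+1) : ℂ) * (n.factorial : ℂ) * ((n+1).factorial : ℂ)) * ht


noncomputable def catW (z : ℂ) : ℂ := ∑' n : ℕ, (catalan n : ℂ) * (z / 4) ^ n

lemma norm_cat_term_le {z : ℂ} (n : ℕ) (hr : ‖z‖ ≤ 1) :
    ‖(catalan n : ℂ) * (z / 4) ^ n‖ ≤ ‖z‖ ^ n := by
  rw [norm_mul, norm_pow, norm_div]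
  have h1 : ‖(catalan n : ℂ)‖ = (catalan n : ℝ) := by
    rw [Complex.norm_natCast]
  rw [h1]
  have h2 : ((catalan n : ℝ)) ≤ 4 ^ n := by exact_mod_cast catalan_le_four_pow n
  have h4 : ‖(4 : ℂ)‖ = 4 := by norm_num
  rw [h4]
  calc (catalan n : ℝ) * (‖z‖ / 4) ^ n ≤ 4 ^ n * (‖z‖ / 4) ^ n := by
        apply mul_le_mul_of_nonneg_right h2; positivity
    _ = ‖z‖ ^ n := by
        rw [div_pow, mul_comm, div_mul_cancel₀ _ (by positivity : (4:ℝ)^n ≠ 0)]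
  
lemma summable_norm_cat {z : ℂ} (hz : ‖z‖ < 1) :
    Summable fun n : ℕ => ‖(catalan n : ℂ) * (z / 4) ^ n‖ := by
  apply Summable.of_nonneg_of_le (fun n => norm_nonneg _)
    (fun n => norm_cat_term_le n hz.le)
  exact summable_geometric_of_lt_one (norm_nonneg z) hz

lemma summable_cat {z : ℂ} (hz : ‖z‖ < 1) :
    Summable fun n : ℕ => (catalan n : ℂ) * (z / 4) ^ n :=
  (summable_norm_cat hz).of_norm

lemma catW_sq {z : ℂ} (hz : ‖z‖ < 1) :
    catW z * catW z = ∑' n : ℕ, (catalan (n + 1) : ℂ) * (z / 4) ^ n := by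
  rw [catW, tsum_mul_tsum_eq_tsum_sum_range_of_summable_norm (summable_norm_cat hz)
    (summable_norm_cat hz)]
  congr 1
  funext n
  rw [catalan_succ']
  rw [Nat.cast_sum, Finset.sum_mul, Finset.Nat.sum_antidiagonal_eq_sum_range_succ_mk]
  apply Finset.sum_congr rfl
  intro k hk
  simp only [Finset.mem_range] at hk
  have hkn : k ≤ n := by omega
  rw [Nat.cast_mul]
  have : (z / 4) ^ k * (z / 4) ^ (n - k) = (z / 4) ^ n := by
    rw [← pow_add]; congr 1; omega
  rw [← this]; ring

lemma catW_eq {z : ℂ} (hz : ‖z‖ < 1) :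
    catW z = 1 + z / 4 * (catW z * catW z) := by
  have h2 : z / 4 * (catW z * catW z)
      = ∑' n : ℕ, (catalan (n + 1) : ℂ) * (z / 4) ^ (n + 1) := by
    rw [catW_sq hz, ← tsum_mul_left]
    congr 1; funext n; rw [pow_succ]; ring
  rw [h2, catW, (summable_cat hz).tsum_eq_zero_add]
  simp only [catalan_zero, Nat.cast_one, pow_zero, mul_one]


lemma continuousOn_catW : ContinuousOn catW (ball (0 : ℂ) 1) := by
  intro z0 hz0
  apply ContinuousAt.continuousWithinAt
  rw [mem_ball, dist_zero_right] at hz0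
  set r : ℝ := (1 + ‖z0‖) / 2 with hr
  have hr1 : r < 1 := by rw [hr]; linarith
  have hr0 : ‖z0‖ < r := by rw [hr]; linarith
  have hrpos : 0 ≤ r := le_trans (norm_nonneg _) hr0.le
  have hcont : ContinuousOn catW (closedBall (0 : ℂ) r) := by
    apply continuousOn_tsum (u := fun n => r ^ n)
    · intro n; fun_prop
    · exact summable_geometric_of_lt_one hrpos hr1
    · intro n x hx
      rw [mem_closedBall, dist_zero_right] at hx
      calc ‖(catalan n : ℂ) * (x / 4) ^ n‖ ≤ ‖x‖ ^ n :=
            norm_cat_term_le n (hx.trans hr1.le)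
        _ ≤ r ^ n := pow_le_pow_left₀ (norm_nonneg _) hx n
  exact hcont.continuousAt (Filter.mem_of_superset
    (isOpen_ball.mem_nhds (by rwa [mem_ball, dist_zero_right])) ball_subset_closedBall)


lemma one_sub_ne {z : ℂ} (hz : ‖z‖ < 1) : (1 : ℂ) - z ≠ 0 := by
  intro h
  have : z = 1 := by linear_combination -h
  rw [this] at hz; norm_num at hz

lemma s_sq {z : ℂ} (hz : ‖z‖ < 1) :
    (1 - z) ^ (1 / 2 : ℂ) * (1 - z) ^ (1 / 2 : ℂ) = 1 - z := by
  rw [← cpow_add _ _ (one_sub_ne hz)]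
  norm_num

lemma s_ne {z : ℂ} (hz : ‖z‖ < 1) : (1 - z) ^ (1 / 2 : ℂ) ≠ 0 := by
  intro h
  rw [cpow_eq_zero_iff] at h
  exact one_sub_ne hz h.1

lemma continuousOn_s : ContinuousOn (fun z : ℂ => (1 - z) ^ (1 / 2 : ℂ)) (ball (0 : ℂ) 1) := by
  intro z hz
  rw [mem_ball, dist_zero_right] at hz
  apply ContinuousAt.continuousWithinAt
  apply ContinuousAt.comp (g := fun w : ℂ => w ^ (1 / 2 : ℂ))
  · apply continuousAt_cpow_const
    left
    have : |z.re| ≤ ‖z‖ := abs_re_le_norm z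
    simp only [sub_re, one_re]
    have : z.re < 1 := lt_of_le_of_lt (le_abs_self _) (lt_of_le_of_lt this hz)
    linarith
  · fun_prop

lemma key_sq {z : ℂ} (hz : ‖z‖ < 1) :
    (2 - z * catW z) ^ 2 = 4 * (1 - z) := by
  linear_combination (-4 * z) * catW_eq hz

lemma sign_eq : ∀ z ∈ ball (0 : ℂ) 1, 2 - z * catW z = 2 * (1 - z) ^ (1 / 2 : ℂ) := by
  set S := ball (0 : ℂ) 1
  set q : ℂ → ℂ := fun z => (2 - z * catW z) / (2 * (1 - z) ^ (1 / 2 : ℂ)) with hq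
  have hnorm : ∀ z ∈ S, ‖z‖ < 1 := by
    intro z hz; rwa [mem_ball, dist_zero_right] at hz
  have hqcont : ContinuousOn q S := by
    apply ContinuousOn.div
    · exact (continuousOn_const.sub (continuousOn_id.mul continuousOn_catW))
    · exact continuousOn_const.mul continuousOn_s
    · intro z hz
      exact mul_ne_zero two_ne_zero (s_ne (hnorm z hz))
  have hq1 : ∀ z ∈ S, q z = 1 ∨ q z = -1 := by
    intro z hz
    have h1 : (q z) ^ 2 = 1 := by
      rw [hq]
      rw [div_pow, key_sq (hnorm z hz)]
      rw [mul_pow]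
      have : ((1 - z) ^ (1 / 2 : ℂ)) ^ 2 = 1 - z := by
        rw [sq]; exact s_sq (hnorm z hz)
      rw [this]
      field_simp [one_sub_ne (hnorm z hz)]
      ring
    have : (q z - 1) * (q z + 1) = 0 := by linear_combination h1
    rcases mul_eq_zero.mp this with h | h
    · left; linear_combination h
    · right; linear_combination h
  -- clopen argument
  have hpre : IsPreconnected S := (convex_ball (0:ℂ) 1).isPreconnected
  have hu : IsOpen (S ∩ q ⁻¹' ball (1:ℂ) 1) :=
    hqcont.isOpen_inter_preimage isOpen_ball isOpen_ball
  have hv : IsOpen (S ∩ q ⁻¹' ball (-1:ℂ) 1) :=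
    hqcont.isOpen_inter_preimage isOpen_ball isOpen_ball
  have hdisj : Disjoint (S ∩ q ⁻¹' ball (1:ℂ) 1) (S ∩ q ⁻¹' ball (-1:ℂ) 1) := by
    rw [Set.disjoint_iff]
    rintro x ⟨⟨-, h1⟩, ⟨-, h2⟩⟩
    rw [mem_preimage, mem_ball] at h1 h2
    have := dist_triangle (1:ℂ) (q x) (-1)
    rw [dist_comm (1:ℂ) (q x)] at this
    have h3 : dist (1:ℂ) (-1) = 2 := by
      rw [Complex.dist_eq]; norm_num
    linarith
  have hsub : S ⊆ (S ∩ q ⁻¹' ball (1:ℂ) 1) ∪ (S ∩ q ⁻¹' ball (-1:ℂ) 1) := by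
    intro z hz
    rcases hq1 z hz with h | h
    · left; exact ⟨hz, by rw [mem_preimage, mem_ball, h, dist_self]; norm_num⟩
    · right; exact ⟨hz, by rw [mem_preimage, mem_ball, h, dist_self]; norm_num⟩
  have h0S : (0 : ℂ) ∈ S := by rw [mem_ball, dist_zero_right]; norm_num
  have hq0 : q 0 = 1 := by
    rw [hq]
    simp only [zero_mul, sub_zero, one_cpow]
    norm_num
  have hne : (S ∩ (S ∩ q ⁻¹' ball (1:ℂ) 1)).Nonempty := by
    refine ⟨0, h0S, h0S, ?_⟩
    rw [mem_preimage, mem_ball, hq0, dist_self]; norm_num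
  have hfinal := hpre.subset_left_of_subset_union hu hv hdisj hsub hne
  intro z hz
  have hzq := hfinal hz
  have hq1' : q z = 1 := by
    rcases hq1 z hz with h | h
    · exact h
    · exfalso
      have := hzq.2
      rw [mem_preimage, mem_ball, h] at this
      rw [Complex.dist_eq] at this
      norm_num at this
  have := hq1'
  rw [hq, div_eq_one_iff_eq (mul_ne_zero two_ne_zero (s_ne (hnorm z hz)))] at this
  exact this

theorem stmt1 (z : ℂ) (hz : ‖z‖ < 1) :
    z * hyp 1 (3 / 2) 3 z = 4 * z / (1 + (1 - z) ^ (1 / 2 : ℂ)) ^ 2 := by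
  have hzb : z ∈ ball (0 : ℂ) 1 := by rwa [mem_ball, dist_zero_right]
  have hW : hyp 1 (3 / 2) 3 z = catW z * catW z := by
    rw [hyp, catW_sq hz]
    apply tsum_congr
    intro n
    rw [coeff_eq n, div_pow]
    field_simp
  have hsign := sign_eq z hzb
  have h1s : (1 : ℂ) + (1 - z) ^ (1 / 2 : ℂ) ≠ 0 := by
    intro h
    have hs : (1 - z) ^ (1 / 2 : ℂ) = -1 := by linear_combination h
    have := s_sq hz
    rw [hs] at this
    have hz0 : z = 0 := by linear_combination this
    rw [hz0] at hs
    rw [sub_zero, one_cpow] at hs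
    norm_num at hs
  by_cases hz0 : z = 0
  · subst hz0; simp
  · apply mul_left_cancel₀ hz0
    rw [hW]
    rw [mul_div_assoc']
    rw [eq_div_iff (pow_ne_zero 2 h1s)]
    have hs2 := s_sq hz
    have hzw : z * catW z = 2 - 2 * (1 - z) ^ (1 / 2 : ℂ) := by linear_combination -hsign
    linear_combination ((z * catW z + 2 - 2 * (1 - z) ^ (1 / 2 : ℂ)) *
        (1 + (1 - z) ^ (1 / 2 : ℂ)) ^ 2) * hzw
      - (4 * (1 - (1 - z) ^ (1 / 2 : ℂ) * (1 - z) ^ (1 / 2 : ℂ) + z)) * hs2
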